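/- Assume all agents have additive cost functions. Every PMMS allocation is EFX. -/

import Mathlib

open Finset

/-- `T` is a `k`-partition of the bundle `S`: pairwise disjoint bundles whose union is `S`. -/
def IsPartitionOf {E : Type*} [DecidableEq E] {k : ℕ} (T : Fin k → Finset E) (S : Finset E) :
    Prop :=
  (∀ i j : Fin k, i ≠ j → Disjoint (T i) (T j)) ∧ Finset.univ.biUnion T = S

/-- The maximin share of cost function `c` on `S` among `k` agents:
the minimum over `k`-partitions of `S` of the maximum cost of a bundle. -/
noncomputable def MMS {E : Type*} [DecidableEq E] (c : Finset E → ℝ) (k : ℕ) (S : Finset E) :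
    ℝ :=
  sInf { m : ℝ | ∃ T : Fin k → Finset E, IsPartitionOf T S ∧ m = ⨆ j : Fin k, c (T j) }

/-- `c` is a nonnegative additive cost function. -/
def AdditiveCost {E : Type*} [DecidableEq E] (c : Finset E → ℝ) : Prop :=
  (∀ S : Finset E, 0 ≤ c S) ∧ ∀ S : Finset E, c S = ∑ e ∈ S, c {e}

/-- `c` is a nonnegative monotone cost function with `c ∅ = 0`. -/
def MonotoneCost {E : Type*} (c : Finset E → ℝ) : Prop :=
  (∀ S : Finset E, 0 ≤ c S) ∧ c ∅ = 0 ∧ ∀ ⦃S T : Finset E⦄, S ⊆ T → c S ≤ c T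

/-- `c` is subadditive. -/
def SubadditiveCost {E : Type*} [DecidableEq E] (c : Finset E → ℝ) : Prop :=
  ∀ S T : Finset E, c (S ∪ T) ≤ c S + c T

/-- `c` is submodular. -/
def SubmodularCost {E : Type*} [DecidableEq E] (c : Finset E → ℝ) : Prop :=
  ∀ S T : Finset E, c (S ∪ T) + c (S ∩ T) ≤ c S + c T

/-- `A` is an allocation of all chores among the `n` agents. -/
def IsAllocation {E : Type*} [DecidableEq E] [Fintype E] {n : ℕ} (A : Fin n → Finset E) : Prop :=
  IsPartitionOf A Finset.univ

/-- `A` is `α`-envy-free. -/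
def IsEF {E : Type*} {n : ℕ} (α : ℝ) (c : Fin n → Finset E → ℝ) (A : Fin n → Finset E) : Prop :=
  ∀ i j, c i (A i) ≤ α * c i (A j)

/-- `A` is `α`-envy-free up to one item. -/
def IsEF1 {E : Type*} [DecidableEq E] {n : ℕ} (α : ℝ) (c : Fin n → Finset E → ℝ)
    (A : Fin n → Finset E) : Prop :=
  ∀ i j, i ≠ j → A i = ∅ ∨ ∃ e ∈ A i, c i (A i \ {e}) ≤ α * c i (A j)

/-- `A` is `α`-envy-free up to any (positive-cost) item. -/
def IsEFX {E : Type*} [DecidableEq E] {n : ℕ} (α : ℝ) (c : Fin n → Finset E → ℝ)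
    (A : Fin n → Finset E) : Prop :=
  ∀ i j, i ≠ j → ∀ e ∈ A i, 0 < c i {e} → c i (A i \ {e}) ≤ α * c i (A j)

/-- `A` is an `α`-MMS allocation. -/
def IsMMSFair {E : Type*} [DecidableEq E] [Fintype E] {n : ℕ} (α : ℝ)
    (c : Fin n → Finset E → ℝ) (A : Fin n → Finset E) : Prop :=
  ∀ i, c i (A i) ≤ α * MMS (c i) n Finset.univ

/-- `A` is an `α`-PMMS allocation. -/
def IsPMMS {E : Type*} [DecidableEq E] {n : ℕ} (α : ℝ)
    (c : Fin n → Finset E → ℝ) (A : Fin n → Finset E) : Prop :=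
  ∀ i j, i ≠ j → c i (A i) ≤ α * MMS (c i) 2 (A i ∪ A j)

/-- The optimal (minimum) social cost over all allocations. -/
noncomputable def OPT {E : Type*} [DecidableEq E] [Fintype E] {n : ℕ}
    (c : Fin n → Finset E → ℝ) : ℝ :=
  sInf { s : ℝ | ∃ A : Fin n → Finset E, IsAllocation A ∧ s = ∑ i, c i (A i) }

/-- Proposition 5.1: with additive cost functions, every PMMS allocation is EFX. -/
theorem PMMS_implies_EFX {E : Type*} [DecidableEq E] [Fintype E] {n : ℕ} (hn : 2 ≤ n)
    (c : Fin n → Finset E → ℝ) (hc : ∀ i, AdditiveCost (c i))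
    (A : Fin n → Finset E) (hA : IsAllocation A) (hPMMS : IsPMMS 1 c A) :
    IsEFX 1 c A := by
  intro i j hij e he hpos
  obtain ⟨hnn, hadd⟩ := hc i
  have hdisj : Disjoint (A i) (A j) := hA.1 i j hij
  have hej : e ∉ A j := fun h => (Finset.disjoint_left.mp hdisj he) h
  set T : Fin 2 → Finset E := fun k => if k = 0 then A i \ {e} else A j ∪ {e} with hT
  have hD : Disjoint (A i \ {e}) (A j ∪ {e}) := by
    rw [Finset.disjoint_union_right]
    exact ⟨Finset.disjoint_of_subset_left Finset.sdiff_subset hdisj, Finset.sdiff_disjoint⟩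
  have hpart : IsPartitionOf T (A i ∪ A j) := by
    constructor
    · intro a b hab
      fin_cases a <;> fin_cases b
      · exact absurd rfl hab
      · simpa [T] using hD
      · simpa [T] using hD.symm
      · exact absurd rfl hab
    · ext x
      simp only [Finset.mem_biUnion, Finset.mem_univ, true_and, Fin.exists_fin_two, T]
      simp only [if_pos rfl, if_neg (by decide : (1 : Fin 2) ≠ 0), Finset.mem_sdiff,
        Finset.mem_union, Finset.mem_singleton]
      by_cases hxe : x = e
      · subst hxe; simp [he]
      · simp [hxe]
  have hmem : (⨆ k : Fin 2, c i (T k)) ∈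
      { m : ℝ | ∃ T : Fin 2 → Finset E, IsPartitionOf T (A i ∪ A j) ∧ m = ⨆ k : Fin 2, c i (T k) } :=
    ⟨T, hpart, rfl⟩
  have hbdd : BddBelow { m : ℝ | ∃ T : Fin 2 → Finset E,
      IsPartitionOf T (A i ∪ A j) ∧ m = ⨆ k : Fin 2, c i (T k) } := by
    refine ⟨0, ?_⟩
    rintro m ⟨T', hT', rfl⟩
    exact le_trans (hnn (T' 0))
      (le_ciSup (f := fun k : Fin 2 => c i (T' k)) (Finite.bddAbove_range _) 0)
  have hMMS_le : MMS (c i) 2 (A i ∪ A j) ≤ ⨆ k : Fin 2, c i (T k) :=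
    csInf_le hbdd hmem
  have hsup_le : (⨆ k : Fin 2, c i (T k)) ≤ max (c i (A i \ {e})) (c i (A j ∪ {e})) := by
    apply ciSup_le
    intro k
    fin_cases k
    · simp [T]
    · simp [T]
  have hP := hPMMS i j hij
  rw [one_mul] at hP
  have hkey : c i (A i) ≤ max (c i (A i \ {e})) (c i (A j ∪ {e})) :=
    hP.trans (hMMS_le.trans hsup_le)
  have h1 : c i (A i \ {e}) + c i {e} = c i (A i) := by
    rw [hadd (A i \ {e}), hadd (A i), Finset.sdiff_singleton_eq_erase]
    exact Finset.sum_erase_add _ _ he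
  have h2 : c i (A j ∪ {e}) = c i (A j) + c i {e} := by
    have hins : A j ∪ {e} = insert e (A j) := by
      ext x; simp [or_comm]
    rw [hins, hadd (insert e (A j)), hadd (A j), Finset.sum_insert hej, add_comm]
  rw [one_mul]
  rcases le_max_iff.mp hkey with h | h
  · linarith
  · rw [h2] at h
    linarith
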